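/- Every matrix in the convex hull of the set of skew-bias matrices of sequences that list each neuron of N = {1,...,n} exactly once satisfies all of the consistent-bias inequalities: if M = [m_{ij}] is such a matrix, then -1 ≤ m_{ij} ≤ 1 for all i < j, and -1 ≤ m_{ij} + m_{jk} - m_{ik} ≤ 1 for all i < j < k. That is, the fundamental polytope is contained in the consistent-bias polytope. -/
import Mathlib


open Finset

namespace NeuralSeq

/-- The bias count `c_{ij}(s)`: number of index pairs `k < k'` with `s_k = i` and `s_{k'} = j`. -/
def biasCount {n : ℕ} : List (Fin n) → Fin n → Fin n → ℕ
  | [], _, _ => 0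
  | a :: t, i, j => (if a = i then t.count j else 0) + biasCount t i j

/-- The skew bias `β_{ij}(s)`. -/
noncomputable def skewBias {n : ℕ} (s : List (Fin n)) (i j : Fin n) : ℝ :=
  if 0 < s.count i ∧ 0 < s.count j then
    ((biasCount s i j : ℝ) - (biasCount s j i : ℝ)) / ((s.count i : ℝ) * (s.count j : ℝ))
  else 0

/-- The skew-bias matrix `B_skew(s)`. -/
noncomputable def Bskew {n : ℕ} (s : List (Fin n)) : Matrix (Fin n) (Fin n) ℝ :=
  Matrix.of fun i j => skewBias s i j

/-- The probability bias `b_{ij}(s)` (meaningful when `i, j ∈ supp(s)`). -/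
noncomputable def probBias {n : ℕ} (s : List (Fin n)) (i j : Fin n) : ℝ :=
  (biasCount s i j : ℝ) / ((s.count i : ℝ) * (s.count j : ℝ))

/-- The (unnormalized) center of mass `com_i(s)`, with 1-based indexing. -/
noncomputable def com {n : ℕ} (s : List (Fin n)) (i : Fin n) : ℝ :=
  if 0 < s.count i then
    (∑ k : Fin s.length, if s.get k = i then ((k : ℕ) + 1 : ℝ) else 0) / (s.count i : ℝ)
  else ((s.length : ℝ) + 1) / 2

/-- The normalized center of mass `γ_i(s)`. -/
noncomputable def gamma {n : ℕ} (s : List (Fin n)) (i : Fin n) : ℝ :=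
  (2 * com s i - 1) / (s.length : ℝ) - 1

/-- The firing rate `ρ_i(s)`. -/
noncomputable def rate {n : ℕ} (s : List (Fin n)) (i : Fin n) : ℝ :=
  (s.count i : ℝ) / (s.length : ℝ)

/-- A sequence is pure if for every pair of distinct active neurons, all spikes of one
precede all spikes of the other (equivalently, `c_{ij}(s) = 0` or `c_{ji}(s) = 0`). -/
def IsPure {n : ℕ} (s : List (Fin n)) : Prop :=
  ∀ i j : Fin n, i ≠ j → 0 < s.count i → 0 < s.count j →
    biasCount s i j = 0 ∨ biasCount s j i = 0

/-- The subsequence `s_I` of `s` given by an index set `I`. -/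
def subseqOf {n : ℕ} (s : List (Fin n)) (I : Finset (Fin s.length)) : List (Fin n) :=
  ((List.finRange s.length).filter (fun k => decide (k ∈ I))).map s.get

/-- The shuffling `s^π` of `s` by a permutation `π` of its index set. -/
def shuffle {n : ℕ} (s : List (Fin n)) (π : Equiv.Perm (Fin s.length)) : List (Fin n) :=
  (List.finRange s.length).map (fun k => s.get (π k))

/-- The order-`m` bias count `c_v(s)`: the number of subsequences of `s` equal to `v`. -/
def orderCount {n : ℕ} : List (Fin n) → List (Fin n) → ℕ
  | _, [] => 1
  | [], _ :: _ => 0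
  | a :: t, v :: vs => (if a = v then orderCount t vs else 0) + orderCount t (v :: vs)

lemma biasCount_zero_right {n : ℕ} (s : List (Fin n)) (i j : Fin n)
    (h : s.count j = 0) : biasCount s i j = 0 := by
  induction s with
  | nil => rfl
  | cons a t ih =>
    rw [List.count_cons] at h
    have h1 : t.count j = 0 := by omega
    simp [biasCount, ih h1, h1]

lemma biasCount_add {n : ℕ} (s : List (Fin n)) (i j : Fin n) (hij : i ≠ j) :
    biasCount s i j + biasCount s j i = s.count i * s.count j := by
  induction s with
  | nil => simp [biasCount]
  | cons a t ih =>
    by_cases hai : a = i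
    · subst hai
      simp [biasCount, List.count_cons, hij, Ne.symm hij]
      nlinarith [ih]
    · by_cases haj : a = j
      · subst haj
        simp [biasCount, List.count_cons, hai, Ne.symm hai]
        nlinarith [ih]
      · simp [biasCount, List.count_cons, hai, haj, Ne.symm hai, Ne.symm haj]
        nlinarith [ih]

lemma biasCount_trans {n : ℕ} (s : List (Fin n)) (i j k : Fin n) (hij : i ≠ j)
    (hcj : s.count j = 1) (h1 : 0 < biasCount s i j) (h2 : 0 < biasCount s j k) :
    0 < biasCount s i k := by
  induction s with
  | nil => simp [biasCount] at h1
  | cons a t ih =>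
    by_cases hai : a = i
    · subst hai
      have h2' : 0 < biasCount t j k := by
        simpa [biasCount, hij] using h2
      have hk : 0 < t.count k := by
        by_contra h
        rw [biasCount_zero_right t j k (by omega)] at h2'
        exact absurd h2' (lt_irrefl 0)
      have : biasCount (a :: t) a k = t.count k + biasCount t a k := by
        simp [biasCount]
      omega
    · by_cases haj : a = j
      · subst haj
        have h1' : 0 < biasCount t i a := by
          simpa [biasCount, hai] using h1
        have hj : 0 < t.count a := by
          by_contra h
          rw [biasCount_zero_right t i a (by omega)] at h1'
          exact absurd h1' (lt_irrefl 0)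
        rw [List.count_cons] at hcj
        simp at hcj
        omega
      · have h1' : 0 < biasCount t i j := by simpa [biasCount, hai] using h1
        have h2' : 0 < biasCount t j k := by simpa [biasCount, haj] using h2
        have hcj' : t.count j = 1 := by
          rw [List.count_cons] at hcj
          simpa [haj] using hcj
        have := ih hcj' h1' h2'
        have : biasCount t i k ≤ biasCount (a :: t) i k := by
          simp [biasCount, hai]
        omega

lemma skewBias_eq {n : ℕ} (t : List (Fin n)) (ht : ∀ i, t.count i = 1) (i j : Fin n) :
    skewBias t i j = (biasCount t i j : ℝ) - (biasCount t j i : ℝ) := by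
  simp [skewBias, ht i, ht j]

end NeuralSeq

open NeuralSeq in
/-- the fundamental polytope (convex hull of the skew-bias matrices of
one-spike-per-neuron sequences) is contained in the consistent-bias polytope. -/
theorem fundamental_polytope_subset_consistent {n : ℕ} (M : Matrix (Fin n) (Fin n) ℝ)
    (hM : M ∈ convexHull ℝ {A : Matrix (Fin n) (Fin n) ℝ |
        ∃ t : List (Fin n), (∀ i : Fin n, t.count i = 1) ∧ A = Bskew t}) :
    (∀ i j : Fin n, i < j → -1 ≤ M i j ∧ M i j ≤ 1) ∧
    (∀ i j k : Fin n, i < j → j < k →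
      -1 ≤ M i j + M j k - M i k ∧ M i j + M j k - M i k ≤ 1) := by
  set C : Set (Matrix (Fin n) (Fin n) ℝ) := {M |
    (∀ i j : Fin n, i < j → -1 ≤ M i j ∧ M i j ≤ 1) ∧
    (∀ i j k : Fin n, i < j → j < k →
      -1 ≤ M i j + M j k - M i k ∧ M i j + M j k - M i k ≤ 1)} with hC
  have hsub : {A : Matrix (Fin n) (Fin n) ℝ |
      ∃ t : List (Fin n), (∀ i : Fin n, t.count i = 1) ∧ A = Bskew t} ⊆ C := by
    rintro A ⟨t, ht, rfl⟩
    have hval : ∀ i j : Fin n, Bskew t i j =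
        (biasCount t i j : ℝ) - (biasCount t j i : ℝ) := by
      intro i j
      simp [Bskew, skewBias_eq t ht]
    have hadd : ∀ i j : Fin n, i ≠ j → biasCount t i j + biasCount t j i = 1 := by
      intro i j hij
      rw [biasCount_add t i j hij, ht i, ht j]
    constructor
    · intro i j hij
      have hne : i ≠ j := ne_of_lt hij
      have h1 := hadd i j hne
      rw [hval i j]
      have : biasCount t i j = 0 ∧ biasCount t j i = 1 ∨
          biasCount t i j = 1 ∧ biasCount t j i = 0 := by omega
      rcases this with ⟨h2, h3⟩ | ⟨h2, h3⟩ <;> rw [h2, h3] <;> norm_num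
    · intro i j k hij hjk
      have hij' : i ≠ j := ne_of_lt hij
      have hjk' : j ≠ k := ne_of_lt hjk
      have hik' : i ≠ k := ne_of_lt (lt_trans hij hjk)
      have hA := hadd i j hij'
      have hB := hadd j k hjk'
      have hD := hadd i k hik'
      -- exclusions via transitivity
      have htr1 : biasCount t i j = 0 ∨ biasCount t j k = 0 ∨ biasCount t k i = 0 := by
        by_contra h
        push_neg at h
        obtain ⟨e1, e2, e3⟩ := h
        have := biasCount_trans t i j k hij' (ht j)
          (by omega) (by omega)
        omega
      have htr2 : biasCount t j i = 0 ∨ biasCount t k j = 0 ∨ biasCount t i k = 0 := by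
        by_contra h
        push_neg at h
        obtain ⟨e1, e2, e3⟩ := h
        have := biasCount_trans t k j i (Ne.symm hjk') (ht j)
          (by omega) (by omega)
        omega
      have hS : biasCount t i j + biasCount t j k + biasCount t k i = 1 ∨
          biasCount t i j + biasCount t j k + biasCount t k i = 2 := by omega
      rw [hval i j, hval j k, hval i k]
      have rA : (biasCount t i j : ℝ) + (biasCount t j i : ℝ) = 1 := by exact_mod_cast hA
      have rB : (biasCount t j k : ℝ) + (biasCount t k j : ℝ) = 1 := by exact_mod_cast hB
      have rD : (biasCount t i k : ℝ) + (biasCount t k i : ℝ) = 1 := by exact_mod_cast hD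
      rcases hS with hS | hS
      · have rS : (biasCount t i j : ℝ) + (biasCount t j k : ℝ) +
            (biasCount t k i : ℝ) = 1 := by exact_mod_cast hS
        constructor <;> linarith
      · have rS : (biasCount t i j : ℝ) + (biasCount t j k : ℝ) +
            (biasCount t k i : ℝ) = 2 := by exact_mod_cast hS
        constructor <;> linarith
  have hconv : Convex ℝ C := by
    rintro M1 ⟨p1, q1⟩ M2 ⟨p2, q2⟩ a b ha hb hab
    have happ : ∀ i j : Fin n, (a • M1 + b • M2) i j = a * M1 i j + b * M2 i j := by
      intro i j
      simp [Matrix.add_apply, Matrix.smul_apply, smul_eq_mul]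
    constructor
    · intro i j hij
      rw [happ]
      obtain ⟨u1, u2⟩ := p1 i j hij
      obtain ⟨v1, v2⟩ := p2 i j hij
      constructor <;> nlinarith
    · intro i j k hij hjk
      rw [happ, happ, happ]
      obtain ⟨u1, u2⟩ := q1 i j k hij hjk
      obtain ⟨v1, v2⟩ := q2 i j k hij hjk
      constructor <;> nlinarith
  exact convexHull_min hsub hconv hM
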